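/- Let $\{X(t)\}$ be i.i.d. with $\mathbb{E}[|X(1)|^p] \le u$ for constants $u > 0$ and $p \in (1,2]$, and mean $\theta$. Define the truncated empirical mean $\widehat{\theta}(s,\epsilon) = \frac{1}{s}\sum_{t=1}^s X(t)\mathbb{1}\{|X(t)| \le (ut/\log(\epsilon^{-1}))^{1/p}\}$. Then for any $\epsilon \in (0, 1/2]$, $\Pr\left(|\widehat{\theta}(s,\epsilon) - \theta| > 4u^{1/p}\left(\frac{\log(\epsilon^{-1})}{s}\right)^{\frac{p-1}{p}}\right) \le 2\epsilon$. -/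

import Mathlib

open MeasureTheory Real


private lemma exp_le_one_add_add_sq {x : ℝ} (hx : |x| ≤ 1) :
    Real.exp x ≤ 1 + x + x ^ 2 := by
  have h := Real.exp_bound hx (n := 2) (by norm_num)
  simp [Finset.sum_range_succ] at h
  have h1 := (abs_sub_le_iff.1 h).1
  nlinarith [sq_abs x, abs_nonneg x]

private lemma sum_rpow_neg_le (s : ℕ) {α : ℝ} (hα0 : 0 ≤ α) (hα1 : α < 1) :
    ∑ t ∈ Finset.Icc 1 s, ((t : ℝ)) ^ (-α) ≤ (s : ℝ) ^ (1 - α) / (1 - α) := by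
  have h1α : (0:ℝ) < 1 - α := by linarith
  have key : ∀ t : ℕ, 1 ≤ t →
      (1 - α) * (t : ℝ) ^ (-α) ≤ (t : ℝ) ^ (1 - α) - ((t : ℝ) - 1) ^ (1 - α) := by
    intro t ht
    have ht0 : (0:ℝ) < t := by exact_mod_cast ht
    have ht1 : (0:ℝ) ≤ (t:ℝ) - 1 := by
      have : (1:ℝ) ≤ t := by exact_mod_cast ht
      linarith
    have hgm : (t:ℝ) ^ α * ((t:ℝ) - 1) ^ (1 - α) ≤ α * t + (1 - α) * ((t:ℝ) - 1) :=
      Real.geom_mean_le_arith_mean2_weighted hα0 (by linarith) ht0.le ht1 (by ring)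
    have hta : (0:ℝ) ≤ (t:ℝ) ^ (-α) := Real.rpow_nonneg ht0.le _
    have hpow : (t:ℝ) ^ α * (t:ℝ) ^ (-α) = 1 := by
      rw [← Real.rpow_add ht0]; simp
    have h2 : (t:ℝ) ^ (1 - α) = (t:ℝ) * (t:ℝ) ^ (-α) := by
      rw [show (1:ℝ) - α = 1 + -α by ring, Real.rpow_add ht0, Real.rpow_one]
    have hmul := mul_le_mul_of_nonneg_right hgm hta
    have hL : (t:ℝ) ^ α * ((t:ℝ) - 1) ^ (1 - α) * (t:ℝ) ^ (-α) = ((t:ℝ) - 1) ^ (1 - α) := by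
      rw [mul_right_comm, hpow, one_mul]
    rw [hL] at hmul
    nlinarith [hmul, h2, hta]
  have tel : ∀ n : ℕ, ∑ t ∈ Finset.Icc 1 n,
      ((t:ℝ) ^ (1-α) - ((t:ℝ) - 1) ^ (1-α)) = (n:ℝ) ^ (1-α) := by
    intro n
    induction n with
    | zero => simp [Real.zero_rpow (ne_of_gt h1α)]
    | succ n ih =>
      rw [Finset.sum_Icc_succ_top (Nat.le_add_left 1 n), ih]
      have h : ((n+1:ℕ):ℝ) - 1 = (n:ℝ) := by push_cast; ring
      rw [h]
      ring
  calc ∑ t ∈ Finset.Icc 1 s, ((t : ℝ)) ^ (-α)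
      = (1/(1-α)) * ∑ t ∈ Finset.Icc 1 s, ((1 - α) * (t : ℝ) ^ (-α)) := by
        rw [Finset.mul_sum]; congr 1; ext t; field_simp
    _ ≤ (1/(1-α)) * ∑ t ∈ Finset.Icc 1 s, ((t : ℝ) ^ (1 - α) - ((t : ℝ) - 1) ^ (1 - α)) := by
        apply mul_le_mul_of_nonneg_left _ (by positivity)
        apply Finset.sum_le_sum
        intro t ht
        exact key t (Finset.mem_Icc.1 ht).1
    _ = (1/(1-α)) * (s : ℝ) ^ (1 - α) := by rw [tel s]
    _ = (s : ℝ) ^ (1 - α) / (1 - α) := by ring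


-- first moment of truncation
private lemma trunc_mean_le {Ω : Type*} [MeasurableSpace Ω] (ℙ : Measure Ω)
    [IsProbabilityMeasure ℙ] (Z : Ω → ℝ) (hZm : Measurable Z)
    (hZint : Integrable Z ℙ) {u p θ : ℝ} (hu : 0 < u) (hp1 : 1 < p)
    (hθ : ∫ ω, Z ω ∂ℙ = θ)
    (hmom : Integrable (fun ω => |Z ω| ^ p) ℙ)
    (hmom_le : ∫ ω, |Z ω| ^ p ∂ℙ ≤ u)
    {B : ℝ} (hB : 0 < B) :
    ∫ ω, (if |Z ω| ≤ B then Z ω else 0) ∂ℙ ≤ θ + u * B ^ (1 - p) := by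
  have hWm : Measurable (fun ω => if |Z ω| ≤ B then (0:ℝ) else Z ω) :=
    Measurable.ite (measurableSet_le hZm.abs measurable_const) measurable_const hZm
  have hWint : Integrable (fun ω => if |Z ω| ≤ B then (0:ℝ) else Z ω) ℙ := by
    refine hZint.norm.mono' hWm.aestronglyMeasurable (Filter.Eventually.of_forall fun ω => ?_)
    by_cases h : |Z ω| ≤ B <;> simp [h, abs_nonneg]
  have hsplit : ∀ ω, (if |Z ω| ≤ B then Z ω else 0)
      = Z ω - (if |Z ω| ≤ B then (0:ℝ) else Z ω) := by
    intro ω; by_cases h : |Z ω| ≤ B <;> simp [h]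
  have hint : ∫ ω, (if |Z ω| ≤ B then Z ω else 0) ∂ℙ
      = θ - ∫ ω, (if |Z ω| ≤ B then (0:ℝ) else Z ω) ∂ℙ := by
    simp_rw [hsplit]
    rw [integral_sub hZint hWint, hθ]
  rw [hint]
  have habs : |∫ ω, (if |Z ω| ≤ B then (0:ℝ) else Z ω) ∂ℙ| ≤ u * B ^ (1 - p) := by
    have hni := norm_integral_le_integral_norm (fun ω => if |Z ω| ≤ B then (0:ℝ) else Z ω) (μ := ℙ)
    simp only [Real.norm_eq_abs] at hni
    refine hni.trans ?_
    have hpt : ∀ ω, |if |Z ω| ≤ B then (0:ℝ) else Z ω| ≤ B ^ (1-p) * |Z ω| ^ p := by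
      intro ω
      by_cases h : |Z ω| ≤ B
      · simp only [h, if_true, abs_zero]
        positivity
      · push_neg at h
        simp only [h.not_ge, if_false]
        have hZpos : (0:ℝ) < |Z ω| := lt_trans hB h
        have h1 : |Z ω| = |Z ω| ^ p * |Z ω| ^ (1 - p) := by
          rw [← Real.rpow_add hZpos, show p + (1-p) = 1 by ring, Real.rpow_one]
        have h2 : |Z ω| ^ (1-p) ≤ B ^ (1-p) :=
          Real.rpow_le_rpow_of_nonpos hB h.le (by linarith)
        calc |Z ω| = |Z ω| ^ p * |Z ω| ^ (1 - p) := h1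
          _ ≤ |Z ω| ^ p * B ^ (1-p) :=
            mul_le_mul_of_nonneg_left h2 (Real.rpow_nonneg (abs_nonneg _) _)
          _ = B ^ (1-p) * |Z ω| ^ p := by ring
    calc ∫ ω, |if |Z ω| ≤ B then (0:ℝ) else Z ω| ∂ℙ
        ≤ ∫ ω, B ^ (1-p) * |Z ω| ^ p ∂ℙ := by
          refine integral_mono hWint.abs (hmom.const_mul _) hpt
      _ = B ^ (1-p) * ∫ ω, |Z ω| ^ p ∂ℙ := integral_const_mul _ _
      _ ≤ B ^ (1-p) * u := by
          exact mul_le_mul_of_nonneg_left hmom_le (Real.rpow_nonneg hB.le _)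
      _ = u * B ^ (1-p) := by ring
  have := (abs_le.1 habs).1
  linarith [(abs_le.1 habs).2]

-- second moment of truncation
private lemma trunc_sq_le {Ω : Type*} [MeasurableSpace Ω] (ℙ : Measure Ω)
    [IsProbabilityMeasure ℙ] (Z : Ω → ℝ) (hZm : Measurable Z)
    {u p : ℝ} (hu : 0 < u) (hp1 : 1 < p) (hp2 : p ≤ 2)
    (hmom : Integrable (fun ω => |Z ω| ^ p) ℙ)
    (hmom_le : ∫ ω, |Z ω| ^ p ∂ℙ ≤ u)
    {B : ℝ} (hB : 0 < B) :
    ∫ ω, (if |Z ω| ≤ B then Z ω else 0) ^ 2 ∂ℙ ≤ u * B ^ (2 - p) := by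
  have hpt : ∀ ω, (if |Z ω| ≤ B then Z ω else 0) ^ 2 ≤ B ^ (2-p) * |Z ω| ^ p := by
    intro ω
    by_cases h : |Z ω| ≤ B
    · simp only [h, if_true]
      rcases eq_or_ne (Z ω) 0 with h0 | h0
      · simp only [h0, abs_zero, Real.zero_rpow (by positivity : p ≠ 0), mul_zero]
        norm_num
      · have hZpos : (0:ℝ) < |Z ω| := abs_pos.2 h0
        have h1 : Z ω ^ 2 = |Z ω| ^ p * |Z ω| ^ (2 - p) := by
          rw [← Real.rpow_add hZpos, show p + (2-p) = 2 by ring, ← sq_abs,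
            show ((2:ℝ)) = ((2:ℕ):ℝ) by norm_num, Real.rpow_natCast]
        have h2 : |Z ω| ^ (2-p) ≤ B ^ (2-p) :=
          Real.rpow_le_rpow (abs_nonneg _) h (by linarith)
        calc Z ω ^ 2 = |Z ω| ^ p * |Z ω| ^ (2 - p) := h1
          _ ≤ |Z ω| ^ p * B ^ (2-p) :=
            mul_le_mul_of_nonneg_left h2 (Real.rpow_nonneg (abs_nonneg _) _)
          _ = B ^ (2-p) * |Z ω| ^ p := by ring
    · rw [if_neg h, zero_pow (two_ne_zero)]
      positivity
  have hm : Measurable (fun ω => (if |Z ω| ≤ B then Z ω else 0) ^ 2) :=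
    ((Measurable.ite (measurableSet_le hZm.abs measurable_const) hZm measurable_const).pow_const 2)
  have hint : Integrable (fun ω => (if |Z ω| ≤ B then Z ω else 0) ^ 2) ℙ := by
    refine (hmom.const_mul (B ^ (2-p))).mono' hm.aestronglyMeasurable
      (Filter.Eventually.of_forall fun ω => ?_)
    rw [Real.norm_eq_abs, abs_of_nonneg (by positivity)]
    exact hpt ω
  calc ∫ ω, (if |Z ω| ≤ B then Z ω else 0) ^ 2 ∂ℙ
      ≤ ∫ ω, B ^ (2-p) * |Z ω| ^ p ∂ℙ := integral_mono hint (hmom.const_mul _) hpt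
    _ = B ^ (2-p) * ∫ ω, |Z ω| ^ p ∂ℙ := integral_const_mul _ _
    _ ≤ B ^ (2-p) * u := mul_le_mul_of_nonneg_left hmom_le (Real.rpow_nonneg hB.le _)
    _ = u * B ^ (2-p) := by ring


private lemma eq_of_log_eq {a b : ℝ} (ha : 0 < a) (hb : 0 < b)
    (h : Real.log a = Real.log b) : a = b := by
  rw [← Real.exp_log ha, ← Real.exp_log hb, h]

private lemma idI {u L s p : ℝ} (hu : 0 < u) (hL : 0 < L) (hs0 : (0:ℝ) < s)
    (hp0 : 0 < p) :
    (L/(u*s))^(1/p) * (u * ((u/L)^(-((p-1)/p)) * s^(1/p))) = L := by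
  apply eq_of_log_eq (by positivity) hL
  rw [Real.log_mul (by positivity) (by positivity),
    Real.log_mul (by positivity) (by positivity),
    Real.log_mul (by positivity) (by positivity),
    Real.log_rpow (by positivity), Real.log_rpow (by positivity),
    Real.log_rpow (by positivity),
    Real.log_div (by positivity) (by positivity),
    Real.log_div (by positivity) (by positivity),
    Real.log_mul (by positivity) (by positivity)]
  field_simp
  ring

private lemma idII {u L s p : ℝ} (hu : 0 < u) (hL : 0 < L) (hs0 : (0:ℝ) < s)
    (hp0 : 0 < p) :
    ((L/(u*s))^(1/p))^2 * (u * (s * ((u/L)^((2-p)/p) * s^((2-p)/p)))) = L := by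
  apply eq_of_log_eq (by positivity) hL
  rw [Real.log_mul (by positivity) (by positivity),
    Real.log_mul (by positivity) (by positivity),
    Real.log_mul (by positivity) (by positivity),
    Real.log_mul (by positivity) (by positivity),
    Real.log_pow,
    Real.log_rpow (by positivity), Real.log_rpow (by positivity),
    Real.log_rpow (by positivity),
    Real.log_div (by positivity) (by positivity),
    Real.log_div (by positivity) (by positivity),
    Real.log_mul (by positivity) (by positivity)]
  field_simp
  ring

private lemma idIII {u L s p : ℝ} (hu : 0 < u) (hL : 0 < L) (hs0 : (0:ℝ) < s)
    (hp0 : 0 < p) :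
    (L/(u*s))^(1/p) * (s * (4 * u^(1/p) * (L/s)^((p-1)/p))) = 4*L := by
  apply eq_of_log_eq (by positivity) (by positivity)
  rw [Real.log_mul (by positivity) (by positivity),
    Real.log_mul (by positivity) (by positivity),
    Real.log_mul (by positivity) (by positivity),
    Real.log_mul (by positivity) (by positivity),
    Real.log_rpow (by positivity), Real.log_rpow (by positivity),
    Real.log_rpow (by positivity),
    Real.log_div (by positivity) (by positivity),
    Real.log_div (by positivity) (by positivity),
    Real.log_mul (by positivity) (by positivity)]
  field_simp
  rw [Real.log_mul (by positivity) (by positivity)]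
  ring

private lemma core_tail {Ω : Type*} [MeasurableSpace Ω]
    (P : Measure Ω) [IsProbabilityMeasure P]
    (X : ℕ → Ω → ℝ) (hmeas : ∀ t, Measurable (X t))
    (hindep : ProbabilityTheory.iIndepFun X P)
    (hident : ∀ t, Measure.map (X t) P = Measure.map (X 0) P)
    (u p θ : ℝ) (hu : 0 < u) (hp1 : 1 < p) (hp2 : p ≤ 2)
    (hXint : Integrable (X 0) P) (hθ : ∫ ω, X 0 ω ∂P = θ)
    (hmom : Integrable (fun ω => |X 0 ω| ^ p) P)
    (hmom_le : ∫ ω, |X 0 ω| ^ p ∂P ≤ u)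
    (s : ℕ) (hs : 0 < s) (L : ℝ) (hL : 0 < L) :
    P {ω | 4 * u ^ ((1 : ℝ) / p) * (L / s) ^ ((p - 1) / p) <
        (1 / (s : ℝ)) * ∑ t ∈ Finset.Icc 1 s,
          (if |X t ω| ≤ (u * t / L) ^ ((1 : ℝ) / p) then X t ω else 0) - θ} ≤
      ENNReal.ofReal (Real.exp (-L)) := by
  have hp0 : (0:ℝ) < p := by linarith
  have hq0 : (0:ℝ) < 1/p := by positivity
  have hs0 : (0:ℝ) < s := by exact_mod_cast hs
  set q : ℝ := 1/p with hq
  set lam : ℝ := (L/(u*s))^q with hlamdef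
  have hlam : 0 < lam := Real.rpow_pos_of_pos (by positivity) _
  set B : ℕ → ℝ := fun t => (u*t/L)^q with hBdef
  set Y : ℕ → Ω → ℝ := fun t ω => if |X t ω| ≤ B t then X t ω else 0 with hYdef
  set δ : ℝ := 4*u^q*(L/(s:ℝ))^((p-1)/p) with hδdef
  set α : ℝ := (p-1)/p with hα
  have hα0 : 0 ≤ α := by rw [hα]; exact div_nonneg (by linarith) hp0.le
  have hα1 : α < 1 := by rw [hα]; rw [div_lt_one hp0]; linarith
  have hδ0 : 0 < δ := by
    rw [hδdef]
    exact mul_pos (mul_pos (by norm_num) (Real.rpow_pos_of_pos hu q))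
      (Real.rpow_pos_of_pos (div_pos hL hs0) _)
  -- basic facts
  have hBpos : ∀ t : ℕ, 1 ≤ t → 0 < B t := by
    intro t ht
    have : (0:ℝ) < t := by exact_mod_cast ht
    exact Real.rpow_pos_of_pos (by positivity) _
  have hYabs : ∀ (t : ℕ), 1 ≤ t → ∀ ω, |Y t ω| ≤ B t := by
    intro t ht ω
    rw [hYdef]
    by_cases h : |X t ω| ≤ B t
    · simpa [h] using h
    · simp [h, (hBpos t ht).le]
  have hlamB : ∀ t ∈ Finset.Icc 1 s, lam * B t ≤ 1 := by
    intro t ht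
    obtain ⟨ht1, hts⟩ := Finset.mem_Icc.1 ht
    have ht0 : (0:ℝ) < t := by exact_mod_cast ht1
    have : lam * B t = ((L/(u*s)) * (u*t/L))^q := by
      rw [hlamdef, hBdef, ← Real.mul_rpow (by positivity) (by positivity)]
    rw [this, show (L/(u*s)) * (u*(t:ℝ)/L) = (t:ℝ)/(s:ℝ) by field_simp]
    apply Real.rpow_le_one (by positivity) _ hq0.le
    rw [div_le_one hs0]
    exact_mod_cast hts
  have hYmeas : ∀ t, Measurable (Y t) := fun t =>
    Measurable.ite (measurableSet_le (hmeas t).abs measurable_const) (hmeas t) measurable_const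
  have hYint : ∀ (t : ℕ), 1 ≤ t → Integrable (Y t) P := by
    intro t ht
    refine (integrable_const (B t)).mono' (hYmeas t).aestronglyMeasurable
      (Filter.Eventually.of_forall fun ω => ?_)
    rw [Real.norm_eq_abs]
    exact hYabs t ht ω
  have hYindep : ProbabilityTheory.iIndepFun Y P :=
    hindep.comp (fun t x => if |x| ≤ B t then x else 0)
      (fun t => Measurable.ite (measurableSet_le measurable_abs measurable_const)
        measurable_id measurable_const)
  -- per-coordinate mgf bound
  have hmgf : ∀ t ∈ Finset.Icc 1 s, ProbabilityTheory.mgf (Y t) P lam ≤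
      Real.exp (lam*θ + (lam*(u*(B t)^(1-p)) + lam^2*(u*(B t)^(2-p)))) := by
    intro t ht
    obtain ⟨ht1, hts⟩ := Finset.mem_Icc.1 ht
    have hBt := hBpos t ht1
    have habs1 : ∀ ω, |lam * Y t ω| ≤ 1 := by
      intro ω
      rw [abs_mul, abs_of_pos hlam]
      exact le_trans (mul_le_mul_of_nonneg_left (hYabs t ht1 ω) hlam.le) (hlamB t ht)
    have hint_exp : Integrable (fun ω => Real.exp (lam * Y t ω)) P := by
      refine (integrable_const (Real.exp 1)).mono'
        (((hYmeas t).const_mul lam).exp).aestronglyMeasurable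
        (Filter.Eventually.of_forall fun ω => ?_)
      rw [Real.norm_eq_abs, abs_of_pos (Real.exp_pos _)]
      exact Real.exp_le_exp.2 (le_trans (le_abs_self _) (habs1 ω))
    have hint_Y := hYint t ht1
    have hint_Y2 : Integrable (fun ω => Y t ω ^ 2) P := by
      refine (integrable_const ((B t) ^ 2)).mono'
        ((hYmeas t).pow_const 2).aestronglyMeasurable
        (Filter.Eventually.of_forall fun ω => ?_)
      rw [Real.norm_eq_abs, abs_of_nonneg (sq_nonneg _)]
      calc Y t ω ^ 2 = |Y t ω| ^ 2 := (sq_abs _).symm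
        _ ≤ (B t) ^ 2 := pow_le_pow_left₀ (abs_nonneg _) (hYabs t ht1 ω) 2
    -- transfer expectations to X 0
    have hg2m : Measurable (fun x : ℝ => (if |x| ≤ B t then x else 0) ^ 2) :=
      (Measurable.ite (measurableSet_le measurable_abs measurable_const)
        measurable_id measurable_const).pow_const 2
    have hgm : Measurable (fun x : ℝ => if |x| ≤ B t then x else 0) :=
      Measurable.ite (measurableSet_le measurable_abs measurable_const)
        measurable_id measurable_const
    have hEY : ∫ ω, Y t ω ∂P ≤ θ + u*(B t)^(1-p) := by
      have htr : ∫ ω, Y t ω ∂P = ∫ ω, (if |X 0 ω| ≤ B t then X 0 ω else 0) ∂P := by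
        calc ∫ ω, Y t ω ∂P
            = ∫ y, (if |y| ≤ B t then y else 0) ∂(Measure.map (X t) P) :=
              (integral_map (hmeas t).aemeasurable hgm.aestronglyMeasurable).symm
          _ = ∫ y, (if |y| ≤ B t then y else 0) ∂(Measure.map (X 0) P) := by rw [hident t]
          _ = ∫ ω, (if |X 0 ω| ≤ B t then X 0 ω else 0) ∂P :=
              integral_map (hmeas 0).aemeasurable hgm.aestronglyMeasurable
      rw [htr]
      exact trunc_mean_le P (X 0) (hmeas 0) hXint hu hp1 hθ hmom hmom_le hBt
    have hEY2 : ∫ ω, Y t ω ^ 2 ∂P ≤ u*(B t)^(2-p) := by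
      have htr : ∫ ω, Y t ω ^ 2 ∂P = ∫ ω, (if |X 0 ω| ≤ B t then X 0 ω else 0) ^ 2 ∂P := by
        calc ∫ ω, Y t ω ^ 2 ∂P
            = ∫ y, (if |y| ≤ B t then y else 0) ^ 2 ∂(Measure.map (X t) P) :=
              (integral_map (hmeas t).aemeasurable hg2m.aestronglyMeasurable).symm
          _ = ∫ y, (if |y| ≤ B t then y else 0) ^ 2 ∂(Measure.map (X 0) P) := by rw [hident t]
          _ = ∫ ω, (if |X 0 ω| ≤ B t then X 0 ω else 0) ^ 2 ∂P :=
              integral_map (hmeas 0).aemeasurable hg2m.aestronglyMeasurable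
      rw [htr]
      exact trunc_sq_le P (X 0) (hmeas 0) hu hp1 hp2 hmom hmom_le hBt
    calc ProbabilityTheory.mgf (Y t) P lam
        = ∫ ω, Real.exp (lam * Y t ω) ∂P := rfl
      _ ≤ ∫ ω, (1 + lam * Y t ω + (lam * Y t ω)^2) ∂P := by
          refine integral_mono hint_exp ?_ (fun ω => exp_le_one_add_add_sq (habs1 ω))
          have h2 : (fun ω => 1 + lam * Y t ω + (lam * Y t ω)^2)
              = fun ω => (1 + lam * Y t ω) + lam^2 * (Y t ω ^ 2) := by
            funext ω; ring
          rw [h2]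
          exact ((integrable_const 1).add (hint_Y.const_mul lam)).add (hint_Y2.const_mul _)
      _ = 1 + lam * (∫ ω, Y t ω ∂P) + lam^2 * (∫ ω, Y t ω ^ 2 ∂P) := by
          have h2 : (fun ω => 1 + lam * Y t ω + (lam * Y t ω)^2)
              = fun ω => (1 + lam * Y t ω) + lam^2 * (Y t ω ^ 2) := by
            funext ω; ring
          have hf1 : Integrable (fun ω => 1 + lam * Y t ω) P :=
            (integrable_const 1).add (hint_Y.const_mul lam)
          have hg1 : Integrable (fun ω => lam^2 * Y t ω ^ 2) P := hint_Y2.const_mul _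
          have h3 : (fun ω => 1 + lam * Y t ω + lam^2 * (Y t ω ^ 2))
              = fun ω => (1 + lam * Y t ω) + lam^2 * Y t ω ^ 2 := rfl
          rw [h2, h3, integral_add hf1 hg1,
            integral_add (integrable_const 1) (hint_Y.const_mul lam),
            integral_const, integral_const_mul, integral_const_mul]
          simp [add_assoc]
      _ ≤ 1 + lam * (θ + u*(B t)^(1-p)) + lam^2 * (u*(B t)^(2-p)) := by
          have h1 := mul_le_mul_of_nonneg_left hEY hlam.le
          have h2 := mul_le_mul_of_nonneg_left hEY2 (sq_nonneg lam)
          linarith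
      _ = (lam*θ + (lam*(u*(B t)^(1-p)) + lam^2*(u*(B t)^(2-p)))) + 1 := by ring
      _ ≤ Real.exp (lam*θ + (lam*(u*(B t)^(1-p)) + lam^2*(u*(B t)^(2-p)))) :=
          Real.add_one_le_exp _
  -- sum bounds
  have hβ : 0 ≤ (2-p)/p := div_nonneg (by linarith) hp0.le
  have hsum1 : ∑ t ∈ Finset.Icc 1 s, (B t)^(1-p) ≤ (u/L)^(-α) * ((s:ℝ)^q * p) := by
    have hBe : ∀ t ∈ Finset.Icc 1 s, (B t)^(1-p) = (u/L)^(-α) * (t:ℝ)^(-α) := by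
      intro t ht
      obtain ⟨ht1, _⟩ := Finset.mem_Icc.1 ht
      have ht0 : (0:ℝ) < t := by exact_mod_cast ht1
      calc (B t)^(1-p) = ((u*(t:ℝ)/L)^q)^(1-p) := by rw [hBdef]
        _ = (u*(t:ℝ)/L)^(q*(1-p)) := (Real.rpow_mul (by positivity) q (1-p)).symm
        _ = (u*(t:ℝ)/L)^(-α) := by rw [hq, hα]; congr 1; field_simp; ring
        _ = ((u/L)*(t:ℝ))^(-α) := by rw [show u*(t:ℝ)/L = (u/L)*(t:ℝ) by ring]
        _ = (u/L)^(-α) * (t:ℝ)^(-α) := Real.mul_rpow (by positivity) (by positivity)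
    calc ∑ t ∈ Finset.Icc 1 s, (B t)^(1-p)
        = ∑ t ∈ Finset.Icc 1 s, (u/L)^(-α) * (t:ℝ)^(-α) := Finset.sum_congr rfl hBe
      _ = (u/L)^(-α) * ∑ t ∈ Finset.Icc 1 s, (t:ℝ)^(-α) := by rw [Finset.mul_sum]
      _ ≤ (u/L)^(-α) * ((s:ℝ)^(1-α)/(1-α)) :=
          mul_le_mul_of_nonneg_left (sum_rpow_neg_le s hα0 hα1)
            (Real.rpow_nonneg (by positivity) _)
      _ = (u/L)^(-α) * ((s:ℝ)^q * p) := by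
          congr 1
          rw [show (1:ℝ) - α = q by rw [hα, hq]; field_simp; ring, hq]
          field_simp
  have hsum2 : ∑ t ∈ Finset.Icc 1 s, (B t)^(2-p)
      ≤ (s:ℝ) * ((u/L)^((2-p)/p) * (s:ℝ)^((2-p)/p)) := by
    have hBe : ∀ t ∈ Finset.Icc 1 s, (B t)^(2-p) ≤ (u/L)^((2-p)/p) * (s:ℝ)^((2-p)/p) := by
      intro t ht
      obtain ⟨ht1, hts⟩ := Finset.mem_Icc.1 ht
      have ht0 : (0:ℝ) < t := by exact_mod_cast ht1
      calc (B t)^(2-p) = ((u*(t:ℝ)/L)^q)^(2-p) := by rw [hBdef]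
        _ = (u*(t:ℝ)/L)^(q*(2-p)) := (Real.rpow_mul (by positivity) q (2-p)).symm
        _ = (u*(t:ℝ)/L)^((2-p)/p) := by rw [hq]; congr 1; field_simp
        _ = ((u/L)*(t:ℝ))^((2-p)/p) := by rw [show u*(t:ℝ)/L = (u/L)*(t:ℝ) by ring]
        _ = (u/L)^((2-p)/p) * (t:ℝ)^((2-p)/p) := Real.mul_rpow (by positivity) (by positivity)
        _ ≤ (u/L)^((2-p)/p) * (s:ℝ)^((2-p)/p) := by
            apply mul_le_mul_of_nonneg_left _ (Real.rpow_nonneg (by positivity) _)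
            exact Real.rpow_le_rpow ht0.le (by exact_mod_cast hts) hβ
    calc ∑ t ∈ Finset.Icc 1 s, (B t)^(2-p)
        ≤ ∑ _t ∈ Finset.Icc 1 s, (u/L)^((2-p)/p) * (s:ℝ)^((2-p)/p) := Finset.sum_le_sum hBe
      _ = (s:ℝ) * ((u/L)^((2-p)/p) * (s:ℝ)^((2-p)/p)) := by
          rw [Finset.sum_const, Nat.card_Icc, nsmul_eq_mul]
          norm_num
  -- Chernoff
  have hSmeas : Measurable (fun ω => ∑ t ∈ Finset.Icc 1 s, Y t ω) := by
    apply Finset.measurable_sum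
    intro t _
    exact hYmeas t
  have hint_expS : Integrable (fun ω => Real.exp (lam * ∑ t ∈ Finset.Icc 1 s, Y t ω)) P := by
    refine (integrable_const (Real.exp (lam * ∑ t ∈ Finset.Icc 1 s, B t))).mono'
      ((hSmeas.const_mul lam).exp).aestronglyMeasurable (Filter.Eventually.of_forall fun ω => ?_)
    rw [Real.norm_eq_abs, abs_of_pos (Real.exp_pos _)]
    apply Real.exp_le_exp.2
    apply mul_le_mul_of_nonneg_left _ hlam.le
    exact Finset.sum_le_sum fun t ht =>
      le_trans (le_abs_self _) (hYabs t (Finset.mem_Icc.1 ht).1 ω)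
  have chern := ProbabilityTheory.measure_ge_le_exp_mul_mgf (μ := P)
      (X := fun ω => ∑ t ∈ Finset.Icc 1 s, Y t ω) ((s:ℝ)*(θ+δ)) hlam.le hint_expS
  -- bound the mgf of the sum
  have hmgfS : ProbabilityTheory.mgf (fun ω => ∑ t ∈ Finset.Icc 1 s, Y t ω) P lam
      ≤ Real.exp (lam*((s:ℝ)*θ) + 3*L) := by
    have he : (fun ω => ∑ t ∈ Finset.Icc 1 s, Y t ω) = ∑ t ∈ Finset.Icc 1 s, Y t := by
      funext ω
      rw [Finset.sum_apply]
    rw [he, hYindep.mgf_sum hYmeas]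
    have b1 : lam*u*(∑ t ∈ Finset.Icc 1 s, (B t)^(1-p)) ≤ 2*L := by
      calc lam*u*(∑ t ∈ Finset.Icc 1 s, (B t)^(1-p))
          ≤ lam*u*((u/L)^(-α) * ((s:ℝ)^q * p)) :=
            mul_le_mul_of_nonneg_left hsum1 (by positivity)
        _ = (lam * (u * ((u/L)^(-α) * (s:ℝ)^q))) * p := by ring
        _ = L * p := by
            rw [hlamdef, hα, hq, idI hu hL hs0 hp0]
        _ ≤ L * 2 := mul_le_mul_of_nonneg_left hp2 hL.le
        _ = 2*L := by ring
    have b2 : lam^2*u*(∑ t ∈ Finset.Icc 1 s, (B t)^(2-p)) ≤ L := by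
      calc lam^2*u*(∑ t ∈ Finset.Icc 1 s, (B t)^(2-p))
          ≤ lam^2*u*((s:ℝ) * ((u/L)^((2-p)/p) * (s:ℝ)^((2-p)/p))) :=
            mul_le_mul_of_nonneg_left hsum2 (by positivity)
        _ = lam^2 * (u * ((s:ℝ) * ((u/L)^((2-p)/p) * (s:ℝ)^((2-p)/p)))) := by ring
        _ = L := by
            rw [hlamdef, hq]
            exact idII hu hL hs0 hp0
    calc ∏ t ∈ Finset.Icc 1 s, ProbabilityTheory.mgf (Y t) P lam
        ≤ ∏ t ∈ Finset.Icc 1 s,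
            Real.exp (lam*θ + (lam*(u*(B t)^(1-p)) + lam^2*(u*(B t)^(2-p)))) :=
          Finset.prod_le_prod (fun t _ => ProbabilityTheory.mgf_nonneg) hmgf
      _ = Real.exp (∑ t ∈ Finset.Icc 1 s,
            (lam*θ + (lam*(u*(B t)^(1-p)) + lam^2*(u*(B t)^(2-p))))) := (Real.exp_sum _ _).symm
      _ ≤ Real.exp (lam*((s:ℝ)*θ) + 3*L) := by
          apply Real.exp_le_exp.2
          rw [Finset.sum_add_distrib, Finset.sum_add_distrib, Finset.sum_const,
            Nat.card_Icc, nsmul_eq_mul]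
          have e1 : ∑ t ∈ Finset.Icc 1 s, lam*(u*(B t)^(1-p))
              = lam*u*(∑ t ∈ Finset.Icc 1 s, (B t)^(1-p)) := by
            rw [Finset.mul_sum]
            exact Finset.sum_congr rfl fun t _ => by ring
          have e2 : ∑ t ∈ Finset.Icc 1 s, lam^2*(u*(B t)^(2-p))
              = lam^2*u*(∑ t ∈ Finset.Icc 1 s, (B t)^(2-p)) := by
            rw [Finset.mul_sum]
            exact Finset.sum_congr rfl fun t _ => by ring
          rw [e1, e2]
          have e3 : ((s + 1 - 1 : ℕ):ℝ) * (lam*θ) = lam*((s:ℝ)*θ) := by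
            push_cast
            ring
          rw [e3]
          linarith [b1, b2]
  -- assemble
  have hIII : lam * ((s:ℝ)*δ) = 4*L := by
    rw [hlamdef, hδdef, hα, hq]
    exact idIII hu hL hs0 hp0
  have hsub : {ω | δ < 1/(s:ℝ) * ∑ t ∈ Finset.Icc 1 s, Y t ω - θ}
      ⊆ {ω | (s:ℝ)*(θ+δ) ≤ ∑ t ∈ Finset.Icc 1 s, Y t ω} := by
    intro ω hω
    simp only [Set.mem_setOf_eq] at hω ⊢
    have h2 := mul_lt_mul_of_pos_left
      (show θ + δ < (1/(s:ℝ)) * (∑ t ∈ Finset.Icc 1 s, Y t ω) by linarith) hs0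
    have h3 : (s:ℝ) * ((1/(s:ℝ)) * (∑ t ∈ Finset.Icc 1 s, Y t ω))
        = ∑ t ∈ Finset.Icc 1 s, Y t ω := by
      field_simp
    rw [h3] at h2
    exact h2.le
  refine le_trans (measure_mono hsub) ?_
  have hne : P {ω | (s:ℝ)*(θ+δ) ≤ ∑ t ∈ Finset.Icc 1 s, Y t ω} ≠ ⊤ := measure_ne_top _ _
  have htoReal : (P {ω | (s:ℝ)*(θ+δ) ≤ ∑ t ∈ Finset.Icc 1 s, Y t ω}).toReal
      ≤ Real.exp (-L) := by
    refine chern.trans ?_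
    calc Real.exp (-lam * ((s:ℝ)*(θ+δ)))
          * ProbabilityTheory.mgf (fun ω => ∑ t ∈ Finset.Icc 1 s, Y t ω) P lam
        ≤ Real.exp (-lam * ((s:ℝ)*(θ+δ))) * Real.exp (lam*((s:ℝ)*θ) + 3*L) :=
          mul_le_mul_of_nonneg_left hmgfS (Real.exp_pos _).le
      _ = Real.exp (-lam * ((s:ℝ)*(θ+δ)) + (lam*((s:ℝ)*θ) + 3*L)) := (Real.exp_add _ _).symm
      _ = Real.exp (-(lam * ((s:ℝ)*δ)) + 3*L) := by
          congr 1
          ring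
      _ = Real.exp (-(4*L) + 3*L) := by rw [hIII]
      _ = Real.exp (-L) := by
          congr 1
          ring
  calc P {ω | (s:ℝ)*(θ+δ) ≤ ∑ t ∈ Finset.Icc 1 s, Y t ω}
        = ENNReal.ofReal (P {ω | (s:ℝ)*(θ+δ) ≤ ∑ t ∈ Finset.Icc 1 s, Y t ω}).toReal :=
          (ENNReal.ofReal_toReal hne).symm
      _ ≤ ENNReal.ofReal (Real.exp (-L)) := ENNReal.ofReal_le_ofReal htoReal

/-- Truncated empirical mean concentration (Bubeck–Cesa-Bianchi–Lugosi): for i.i.d.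
`X` with `E[|X|^p] ≤ u`, `p ∈ (1,2]`, the truncated mean
`θ̂(s,ε) = (1/s) ∑ₜ X(t) 𝟙{|X(t)| ≤ (ut/log(ε⁻¹))^(1/p)}` satisfies
`Pr(|θ̂(s,ε) - θ| > 4u^(1/p)(log(ε⁻¹)/s)^((p-1)/p)) ≤ 2ε` for `ε ∈ (0,1/2]`. -/
theorem truncated_mean_concentration {Ω : Type*} [MeasurableSpace Ω]
    (ℙ : Measure Ω) [IsProbabilityMeasure ℙ]
    (X : ℕ → Ω → ℝ) (hmeas : ∀ t, Measurable (X t))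
    (hindep : ProbabilityTheory.iIndepFun X ℙ)
    (hident : ∀ t, Measure.map (X t) ℙ = Measure.map (X 0) ℙ)
    (u p θ : ℝ) (hu : 0 < u) (hp1 : 1 < p) (hp2 : p ≤ 2)
    (hXint : Integrable (X 0) ℙ) (hθ : ∫ ω, X 0 ω ∂ℙ = θ)
    (hmom : Integrable (fun ω => |X 0 ω| ^ p) ℙ)
    (hmom_le : ∫ ω, |X 0 ω| ^ p ∂ℙ ≤ u)
    (s : ℕ) (hs : 0 < s) (ε : ℝ) (hε : ε ∈ Set.Ioc (0 : ℝ) (1 / 2)) :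
    ℙ {ω | 4 * u ^ ((1 : ℝ) / p) * (Real.log ε⁻¹ / s) ^ ((p - 1) / p) <
        |(1 / (s : ℝ)) * ∑ t ∈ Finset.Icc 1 s,
          (if |X t ω| ≤ (u * t / Real.log ε⁻¹) ^ ((1 : ℝ) / p) then X t ω else 0) - θ|} ≤
      ENNReal.ofReal (2 * ε) := by
  obtain ⟨hε0, hε2⟩ := hε
  have hL : 0 < Real.log ε⁻¹ := Real.log_pos (by
    rw [lt_inv_comm₀ one_pos hε0]
    linarith)
  set L : ℝ := Real.log ε⁻¹ with hLdef
  have hup := core_tail ℙ X hmeas hindep hident u p θ hu hp1 hp2 hXint hθ hmom hmom_le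
    s hs L hL
  -- the reflected process
  have hmeas' : ∀ t, Measurable (fun ω => -(X t ω)) := fun t => (hmeas t).neg
  have hindep' : ProbabilityTheory.iIndepFun
      (fun t ω => -(X t ω)) ℙ :=
    hindep.comp (fun _ x => -x) (fun _ => measurable_neg)
  have hident' : ∀ t, Measure.map (fun ω => -(X t ω)) ℙ
      = Measure.map (fun ω => -(X 0 ω)) ℙ := by
    intro t
    have h1 : (fun ω => -(X t ω)) = (fun x : ℝ => -x) ∘ (X t) := rfl
    have h2 : (fun ω => -(X 0 ω)) = (fun x : ℝ => -x) ∘ (X 0) := rfl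
    rw [h1, h2, ← Measure.map_map measurable_neg (hmeas t),
      ← Measure.map_map measurable_neg (hmeas 0), hident t]
  have hXint' : Integrable (fun ω => -(X 0 ω)) ℙ := hXint.neg
  have hθ' : ∫ ω, -(X 0 ω) ∂ℙ = -θ := by rw [integral_neg, hθ]
  have hmom' : Integrable (fun ω => |(-(X 0 ω))| ^ p) ℙ := by simpa [abs_neg] using hmom
  have hmom_le' : ∫ ω, |(-(X 0 ω))| ^ p ∂ℙ ≤ u := by simpa [abs_neg] using hmom_le
  have hlow := core_tail ℙ (fun t ω => -(X t ω)) hmeas' hindep' hident' u p (-θ)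
    hu hp1 hp2 hXint' hθ' hmom' hmom_le' s hs L hL
  have hset : {ω | 4 * u ^ ((1 : ℝ) / p) * (L / s) ^ ((p - 1) / p) <
        1/(s:ℝ) * ∑ t ∈ Finset.Icc 1 s,
          (if |(-(X t ω))| ≤ (u * t / L) ^ ((1 : ℝ) / p) then -(X t ω) else 0) - -θ}
      = {ω | 4 * u ^ ((1 : ℝ) / p) * (L / s) ^ ((p - 1) / p) <
        -((1/(s:ℝ)) * ∑ t ∈ Finset.Icc 1 s,
          (if |X t ω| ≤ (u * t / L) ^ ((1 : ℝ) / p) then X t ω else 0) - θ)} := by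
    ext ω
    simp only [Set.mem_setOf_eq, abs_neg]
    have hneg : ∀ t : ℕ, (if |X t ω| ≤ (u * t / L) ^ ((1 : ℝ) / p) then -(X t ω) else 0)
        = -(if |X t ω| ≤ (u * t / L) ^ ((1 : ℝ) / p) then X t ω else 0) := by
      intro t
      split_ifs with h <;> simp
    rw [Finset.sum_congr rfl (fun t _ => hneg t), Finset.sum_neg_distrib]
    have e : 1/(s:ℝ) * (-∑ t ∈ Finset.Icc 1 s,
          (if |X t ω| ≤ (u * t / L) ^ ((1 : ℝ) / p) then X t ω else 0)) - -θ
        = -((1/(s:ℝ)) * ∑ t ∈ Finset.Icc 1 s,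
          (if |X t ω| ≤ (u * t / L) ^ ((1 : ℝ) / p) then X t ω else 0) - θ) := by ring
    rw [e]
  rw [hset] at hlow
  have hsubset : {ω | 4 * u ^ ((1 : ℝ) / p) * (L / s) ^ ((p - 1) / p) <
        |(1 / (s : ℝ)) * ∑ t ∈ Finset.Icc 1 s,
          (if |X t ω| ≤ (u * t / L) ^ ((1 : ℝ) / p) then X t ω else 0) - θ|}
      ⊆ {ω | 4 * u ^ ((1 : ℝ) / p) * (L / s) ^ ((p - 1) / p) <
        (1 / (s : ℝ)) * ∑ t ∈ Finset.Icc 1 s,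
          (if |X t ω| ≤ (u * t / L) ^ ((1 : ℝ) / p) then X t ω else 0) - θ}
      ∪ {ω | 4 * u ^ ((1 : ℝ) / p) * (L / s) ^ ((p - 1) / p) <
        -((1/(s:ℝ)) * ∑ t ∈ Finset.Icc 1 s,
          (if |X t ω| ≤ (u * t / L) ^ ((1 : ℝ) / p) then X t ω else 0) - θ)} := by
    intro ω hω
    simp only [Set.mem_setOf_eq] at hω
    rcases lt_abs.1 hω with h | h
    · exact Or.inl h
    · exact Or.inr h
  have hexp : Real.exp (-L) = ε := by
    rw [hLdef, Real.log_inv, neg_neg, Real.exp_log hε0]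
  calc ℙ {ω | 4 * u ^ ((1 : ℝ) / p) * (L / s) ^ ((p - 1) / p) <
        |(1 / (s : ℝ)) * ∑ t ∈ Finset.Icc 1 s,
          (if |X t ω| ≤ (u * t / L) ^ ((1 : ℝ) / p) then X t ω else 0) - θ|}
      ≤ ℙ ({ω | 4 * u ^ ((1 : ℝ) / p) * (L / s) ^ ((p - 1) / p) <
        (1 / (s : ℝ)) * ∑ t ∈ Finset.Icc 1 s,
          (if |X t ω| ≤ (u * t / L) ^ ((1 : ℝ) / p) then X t ω else 0) - θ}
      ∪ {ω | 4 * u ^ ((1 : ℝ) / p) * (L / s) ^ ((p - 1) / p) <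
        -((1/(s:ℝ)) * ∑ t ∈ Finset.Icc 1 s,
          (if |X t ω| ≤ (u * t / L) ^ ((1 : ℝ) / p) then X t ω else 0) - θ)}) :=
        measure_mono hsubset
    _ ≤ ℙ {ω | 4 * u ^ ((1 : ℝ) / p) * (L / s) ^ ((p - 1) / p) <
        (1 / (s : ℝ)) * ∑ t ∈ Finset.Icc 1 s,
          (if |X t ω| ≤ (u * t / L) ^ ((1 : ℝ) / p) then X t ω else 0) - θ}
      + ℙ {ω | 4 * u ^ ((1 : ℝ) / p) * (L / s) ^ ((p - 1) / p) <
        -((1/(s:ℝ)) * ∑ t ∈ Finset.Icc 1 s,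
          (if |X t ω| ≤ (u * t / L) ^ ((1 : ℝ) / p) then X t ω else 0) - θ)} :=
        measure_union_le _ _
    _ ≤ ENNReal.ofReal (Real.exp (-L)) + ENNReal.ofReal (Real.exp (-L)) :=
        add_le_add hup hlow
    _ = ENNReal.ofReal (2 * ε) := by
        rw [← ENNReal.ofReal_add (Real.exp_pos _).le (Real.exp_pos _).le, hexp]
        norm_num [two_mul]
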